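/- Let E be a finite-dimensional real inner product space and J : E × ℝ → ℝ be continuously differentiable, uniformly convex (m-strongly convex for some m > 0), bounded below, with Lipschitz-continuous gradient ∇J. Fix ρ ∈ (0,1/2) and σ ∈ (ρ,1). Let the alternating iterates (q^n, L^n) be generated as follows: (i) q^{n+1} = q^n + β^n p^n, where g^n = ∇_q J(q^n, L^n) is the partial gradient in q, the directions follow the PRP rule p^0 = -g^0, p^{n+1} = -g^{n+1} + α^{n+1} p^n with α^{n+1} = ⟨g^{n+1}, g^{n+1} - g^n⟩/‖g^n‖², and β^n minimizes β ↦ J(q^n + β p^n, L^n) over ℝ; (ii) L^{n+1} = L^n + λ^n d^n, where d^n = -∂J/∂L(q^{n+1}, L^n) and λ^n > 0 satisfies the Wolfe–Powell conditions ∂J/∂L(q^{n+1}, L^{n+1})·d^n ≥ σ ∂J/∂L(q^{n+1}, L^n)·d^n and J(q^{n+1}, L^{n+1}) ≤ J(q^{n+1}, L^n) - ρ λ^n (d^n)². Then liminf_{n→∞} (‖g^n‖ + |d^n|) = 0. -/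

import Mathlib

open scoped RealInnerProductSpace

set_option maxHeartbeats 1000000

lemma line_hasDerivAt {E : Type*} [NormedAddCommGroup E] [InnerProductSpace ℝ E] [CompleteSpace E]
    (J : E × ℝ → ℝ) (hJ : ContDiff ℝ 1 J)
    (gradq : E → ℝ → E)
    (hgradq : ∀ (x : E) (l : ℝ), gradq x l = gradient (fun x' => J (x', l)) x)
    (x v : E) (l b : ℝ) :
    HasDerivAt (fun b : ℝ => J (x + b • v, l)) ⟪gradq (x + b • v) l, v⟫ b := by
  have hdiff : Differentiable ℝ J := hJ.differentiable one_ne_zero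
  set w := x + b • v with hw
  have h1 : DifferentiableAt ℝ (fun x' : E => J (x', l)) w :=
    (hdiff (w, l)).comp w (DifferentiableAt.prodMk differentiableAt_id (differentiableAt_const l))
  have h2 : HasGradientAt (fun x' : E => J (x', l)) (gradq w l) w := by
    rw [hgradq]; exact h1.hasGradientAt
  have h3 := h2.hasFDerivAt
  have h4 : HasDerivAt (fun b : ℝ => x + b • v) v b := by
    simpa using ((hasDerivAt_id b).smul_const v).const_add x
  have h5 := h3.comp_hasDerivAt b h4
  simp [InnerProductSpace.toDual_apply_apply] at h5
  exact h5

lemma sqrt_trick {a b : ℝ} (hb : 0 ≤ b) (h : a ^ 2 ≤ b ^ 2) (ha : 0 ≤ a) : a ≤ b := by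
  nlinarith

theorem alternating_scheme_convergence
    {E : Type*} [NormedAddCommGroup E] [InnerProductSpace ℝ E] [FiniteDimensional ℝ E]
    (J : E × ℝ → ℝ) (hJ : ContDiff ℝ 1 J)
    -- partial gradients of J
    (gradq : E → ℝ → E) (gradL : E → ℝ → ℝ)
    (hgradq : ∀ (x : E) (l : ℝ), gradq x l = gradient (fun x' => J (x', l)) x)
    (hgradL : ∀ (x : E) (l : ℝ), gradL x l = deriv (fun l' => J (x, l')) l)
    -- J is uniformly (m-strongly) convex
    (m : ℝ) (hm : 0 < m)
    (hconv : ∀ w z : E × ℝ,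
      J w + ⟪gradq w.1 w.2, z.1 - w.1⟫ + gradL w.1 w.2 * (z.2 - w.2) +
          (m / 2) * (‖z.1 - w.1‖ ^ 2 + (z.2 - w.2) ^ 2) ≤ J z)
    -- J is bounded below
    (hbdd : BddBelow (Set.range J))
    -- the gradient of J is Lipschitz continuous
    (M : ℝ) (hM : 0 < M)
    (hLip : ∀ w z : E × ℝ,
      ‖gradq w.1 w.2 - gradq z.1 z.2‖ ^ 2 + (gradL w.1 w.2 - gradL z.1 z.2) ^ 2 ≤
        M ^ 2 * (‖w.1 - z.1‖ ^ 2 + (w.2 - z.2) ^ 2))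
    -- Wolfe–Powell parameters
    (ρ σ : ℝ) (hρ : ρ ∈ Set.Ioo (0 : ℝ) (1 / 2)) (hσ : σ ∈ Set.Ioo ρ 1)
    -- the alternating iterates
    (q p g : ℕ → E) (L β α lam d : ℕ → ℝ)
    -- (i) PRP update of q with exact line search
    (hg : ∀ n, g n = gradq (q n) (L n))
    (hq : ∀ n, q (n + 1) = q n + β n • p n)
    (hp0 : p 0 = -g 0)
    (hα : ∀ n, α (n + 1) = ⟪g (n + 1), g (n + 1) - g n⟫ / ‖g n‖ ^ 2)
    (hp : ∀ n, p (n + 1) = -g (n + 1) + α (n + 1) • p n)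
    (hls : ∀ n, ∀ b : ℝ, J (q n + β n • p n, L n) ≤ J (q n + b • p n, L n))
    -- (ii) steepest descent update of L with Wolfe–Powell step sizes
    (hd : ∀ n, d n = -gradL (q (n + 1)) (L n))
    (hL : ∀ n, L (n + 1) = L n + lam n * d n)
    (hlam : ∀ n, 0 < lam n)
    (hcurv : ∀ n, σ * (gradL (q (n + 1)) (L n) * d n) ≤
      gradL (q (n + 1)) (L (n + 1)) * d n)
    (hdec : ∀ n, J (q (n + 1), L (n + 1)) ≤ J (q (n + 1), L n) - ρ * lam n * (d n) ^ 2) :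
    Filter.liminf (fun n => ‖g n‖ + |d n|) Filter.atTop = 0 := by
  obtain ⟨hρ0, hρ2⟩ := hρ
  obtain ⟨hσρ, hσ1⟩ := hσ
  have hσ0 : 0 < σ := lt_trans hρ0 hσρ
  -- abbreviations
  set Jn : ℕ → ℝ := fun n => J (q n, L n) with hJn
  set Jm : ℕ → ℝ := fun n => J (q (n + 1), L n) with hJm
  have hJnv : ∀ k, Jn k = J (q k, L k) := fun k => rfl
  have hJmv : ∀ k, Jm k = J (q (k + 1), L k) := fun k => rfl
  -- the derivative of J along lines in q
  have hline : ∀ (x v : E) (l b : ℝ),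
      HasDerivAt (fun b : ℝ => J (x + b • v, l)) ⟪gradq (x + b • v) l, v⟫ b :=
    fun x v l b => line_hasDerivAt J hJ gradq hgradq x v l b
  -- Lipschitz continuity of gradq along q-lines
  have hqlip : ∀ (x y : E) (l : ℝ), ‖gradq x l - gradq y l‖ ≤ M * ‖x - y‖ := by
    intro x y l
    have h := hLip (x, l) (y, l)
    simp only [sub_self] at h
    apply sqrt_trick (mul_nonneg hM.le (norm_nonneg _)) _ (norm_nonneg _)
    nlinarith [sq_nonneg (gradL x l - gradL y l), h, sq_nonneg ((0:ℝ))]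
  -- descent lemma along q-lines
  have hdesc : ∀ (x : E) (l : ℝ) (v : E) (t : ℝ), 0 < t →
      J (x + t • v, l) ≤ J (x, l) + t * ⟪gradq x l, v⟫ + M * t ^ 2 * ‖v‖ ^ 2 := by
    intro x l v t ht
    have hcont : ContinuousOn (fun b : ℝ => J (x + b • v, l)) (Set.Icc 0 t) := by
      apply Continuous.continuousOn
      exact hJ.continuous.comp
        ((continuous_const.add (continuous_id.smul continuous_const)).prodMk continuous_const)
    obtain ⟨ξ, hξ, hslope⟩ := exists_hasDerivAt_eq_slope (fun b : ℝ => J (x + b • v, l))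
      (fun ξ => ⟪gradq (x + ξ • v) l, v⟫) ht hcont (fun ξ _ => hline x v l ξ)
    simp only [zero_smul, add_zero, sub_zero] at hslope
    rw [eq_div_iff (ne_of_gt ht)] at hslope
    have hlip2 : ‖gradq (x + ξ • v) l - gradq x l‖ ≤ M * (ξ * ‖v‖) := by
      have h := hqlip (x + ξ • v) x l
      have e1 : x + ξ • v - x = ξ • v := by abel
      rw [e1, norm_smul, Real.norm_eq_abs, abs_of_pos hξ.1] at h
      exact h
    have hinner : ⟪gradq (x + ξ • v) l, v⟫ ≤ ⟪gradq x l, v⟫ + M * t * ‖v‖ ^ 2 := by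
      have h := real_inner_le_norm (gradq (x + ξ • v) l - gradq x l) v
      have e : ⟪gradq (x + ξ • v) l - gradq x l, v⟫
          = ⟪gradq (x + ξ • v) l, v⟫ - ⟪gradq x l, v⟫ := inner_sub_left _ _ _
      have h1 : ‖gradq (x + ξ • v) l - gradq x l‖ * ‖v‖ ≤ M * (ξ * ‖v‖) * ‖v‖ :=
        mul_le_mul_of_nonneg_right hlip2 (norm_nonneg v)
      have h2 : M * (ξ * ‖v‖) * ‖v‖ ≤ M * (t * ‖v‖) * ‖v‖ := by
        nlinarith [mul_nonneg (mul_nonneg hM.le (mul_nonneg (norm_nonneg v) (norm_nonneg v)))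
          (sub_nonneg.2 hξ.2.le)]
      nlinarith [h, h1, h2, e]
    have hmul := mul_le_mul_of_nonneg_right hinner ht.le
    nlinarith [hslope, hmul]
  -- basic decrease facts
  have h1 : ∀ n, Jm n ≤ Jn n := by
    intro n
    have := hls n 0
    simpa [hJm, hJn, hq n] using this
  have h2 : ∀ n, Jn (n + 1) ≤ Jm n - ρ * lam n * d n ^ 2 := fun n => hdec n
  have hρld : ∀ n, 0 ≤ ρ * lam n * d n ^ 2 :=
    fun n => mul_nonneg (mul_nonneg hρ0.le (hlam n).le) (sq_nonneg _)
  have hanti : Antitone Jn := by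
    apply antitone_nat_of_succ_le
    intro n
    nlinarith [h2 n, h1 n, hρld n]
  -- lower bound
  set B : ℝ := sInf (Set.range J) with hB
  have hBle : ∀ w : E × ℝ, B ≤ J w := fun w => csInf_le hbdd ⟨w, rfl⟩
  -- convergence of Jn
  have hJb : BddBelow (Set.range Jn) := ⟨B, by rintro _ ⟨n, rfl⟩; exact hBle _⟩
  have hJt : Filter.Tendsto Jn Filter.atTop (nhds (⨅ n, Jn n)) :=
    tendsto_atTop_ciInf hanti hJb
  have hΔ0 : Filter.Tendsto (fun n => Jn n - Jn (n + 1)) Filter.atTop (nhds 0) := by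
    have h' : Filter.Tendsto (fun n => Jn (n + 1)) Filter.atTop (nhds (⨅ n, Jn n)) :=
      hJt.comp (Filter.tendsto_add_atTop_nat 1)
    simpa using hJt.sub h'
  -- q-decrease tends to 0
  have hΔq0 : Filter.Tendsto (fun n => Jn n - Jm n) Filter.atTop (nhds 0) := by
    apply squeeze_zero (fun n => sub_nonneg.2 (h1 n)) (fun n => ?_) hΔ0
    nlinarith [h2 n, hρld n]
  -- lam * d^2 tends to 0
  have hld0 : Filter.Tendsto (fun n => lam n * d n ^ 2) Filter.atTop (nhds 0) := by
    have key : ∀ n, lam n * d n ^ 2 ≤ (1 / ρ) * (Jn n - Jn (n + 1)) := by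
      intro n
      rw [div_mul_eq_mul_div, le_div_iff₀ hρ0]
      nlinarith [h2 n, h1 n]
    have h' : Filter.Tendsto (fun n => (1 / ρ) * (Jn n - Jn (n + 1))) Filter.atTop (nhds 0) := by
      simpa using hΔ0.const_mul (1 / ρ)
    exact squeeze_zero (fun n => mul_nonneg (hlam n).le (sq_nonneg _)) key h'
  -- curvature condition: (1-σ) d² ≤ M λ d²
  have hcurv' : ∀ n, (1 - σ) * d n ^ 2 ≤ M * (lam n * d n ^ 2) := by
    intro n
    set A := gradL (q (n + 1)) (L (n + 1)) with hA
    have hgl : gradL (q (n + 1)) (L n) = -d n := by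
      have := hd n; linarith
    have hc : -σ * d n ^ 2 ≤ A * d n := by
      have := hcurv n
      rw [hgl] at this
      nlinarith
    have hlip' : |A + d n| ≤ M * (lam n * |d n|) := by
      have h := hLip (q (n + 1), L (n + 1)) (q (n + 1), L n)
      simp only [sub_self, norm_zero] at h
      have e2 : L (n + 1) - L n = lam n * d n := by rw [hL n]; ring
      rw [e2, hgl] at h
      apply sqrt_trick (mul_nonneg hM.le (mul_nonneg (hlam n).le (abs_nonneg _))) _
        (abs_nonneg _)
      have hdd : (lam n * d n) ^ 2 = (lam n * |d n|) ^ 2 := by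
        rw [mul_pow, mul_pow, sq_abs]
      nlinarith [sq_nonneg (‖gradq (q (n+1)) (L (n+1)) - gradq (q (n+1)) (L n)‖), h, hdd,
        sq_abs (A + d n), norm_nonneg (gradq (q (n+1)) (L (n+1)) - gradq (q (n+1)) (L n))]
    have habs : (A + d n) * d n ≤ M * (lam n * d n ^ 2) := by
      have ha1 : (A + d n) * d n ≤ |A + d n| * |d n| := by
        rw [← abs_mul]; exact le_abs_self _
      have ha2 : |A + d n| * |d n| ≤ M * (lam n * |d n|) * |d n| :=
        mul_le_mul_of_nonneg_right hlip' (abs_nonneg _)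
      have ha3 : M * (lam n * |d n|) * |d n| = M * (lam n * d n ^ 2) := by
        have habs2 : |d n| * |d n| = d n ^ 2 := by rw [← abs_mul, abs_mul_self, sq]
        rw [← habs2]; ring
      linarith
    nlinarith [hc, habs]
  -- d tends to 0
  have hd2_0 : Filter.Tendsto (fun n => d n ^ 2) Filter.atTop (nhds 0) := by
    have key : ∀ n, d n ^ 2 ≤ (M / (1 - σ)) * (lam n * d n ^ 2) := by
      intro n
      rw [div_mul_eq_mul_div, le_div_iff₀ (by linarith : (0:ℝ) < 1 - σ)]
      nlinarith [hcurv' n]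
    have h' : Filter.Tendsto (fun n => (M / (1 - σ)) * (lam n * d n ^ 2))
        Filter.atTop (nhds 0) := by
      simpa using hld0.const_mul (M / (1 - σ))
    exact squeeze_zero (fun n => sq_nonneg _) key h'
  have hd0 : Filter.Tendsto (fun n => |d n|) Filter.atTop (nhds 0) := by
    have := (Real.continuous_sqrt.tendsto 0).comp hd2_0
    simpa [Function.comp_def, Real.sqrt_sq_eq_abs] using this
  -- upper bound on lam * |d|
  have hlam_ub : ∀ n, lam n * |d n| ≤ (2 * (1 - ρ) / m) * |d n| := by
    intro n
    rcases eq_or_ne (d n) 0 with h0 | h0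
    · simp [h0]
    · have hgl : gradL (q (n + 1)) (L n) = -d n := by
        have := hd n; linarith
      have hcv := hconv (q (n + 1), L n) (q (n + 1), L (n + 1))
      simp only at hcv
      have e2 : L (n + 1) - L n = lam n * d n := by rw [hL n]; ring
      rw [e2, hgl] at hcv
      simp only [sub_self, inner_zero_right, norm_zero] at hcv
      have hd2pos : 0 < d n ^ 2 := by positivity
      have hlampos := hlam n
      have hlle : lam n ≤ 2 * (1 - ρ) / m := by
        rw [le_div_iff₀ hm]
        nlinarith [hcv, hdec n, mul_pos hlampos hd2pos]
      exact mul_le_mul_of_nonneg_right hlle (abs_nonneg _)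
  have hld1 : Filter.Tendsto (fun n => lam n * |d n|) Filter.atTop (nhds 0) := by
    have h' : Filter.Tendsto (fun n => (2 * (1 - ρ) / m) * |d n|) Filter.atTop (nhds 0) := by
      simpa using hd0.const_mul (2 * (1 - ρ) / m)
    exact squeeze_zero (fun n => mul_nonneg (hlam n).le (abs_nonneg _)) hlam_ub h'
  -- orthogonality from exact line search
  have horth : ∀ n, ⟪gradq (q (n + 1)) (L n), p n⟫ = 0 := by
    intro n
    have hmin : IsLocalMin (fun b : ℝ => J (q n + b • p n, L n)) (β n) :=
      Filter.Eventually.of_forall (hls n)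
    have := hmin.hasDerivAt_eq_zero (hline (q n) (p n) (L n) (β n))
    rw [hq n]
    exact this
  -- decrease controls step size
  have hsq : ∀ n, (m / 2) * ‖β n • p n‖ ^ 2 ≤ J (q n, L n) - J (q (n + 1), L n) := by
    intro n
    have hcv := hconv (q (n + 1), L n) (q n, L n)
    simp only at hcv
    have hqd : q n - q (n + 1) = -(β n • p n) := by rw [hq n]; abel
    have hin : ⟪gradq (q (n + 1)) (L n), q n - q (n + 1)⟫ = 0 := by
      rw [hqd, inner_neg_right, real_inner_smul_right, horth n]
      ring
    rw [hqd, norm_neg] at hcv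
    rw [hqd] at hin
    rw [hin] at hcv
    have e2 : L n - L n = 0 := sub_self _
    rw [e2] at hcv
    nlinarith [hcv]
  have hs0 : Filter.Tendsto (fun n => ‖β n • p n‖) Filter.atTop (nhds 0) := by
    have hsq0 : Filter.Tendsto (fun n => ‖β n • p n‖ ^ 2) Filter.atTop (nhds 0) := by
      have key : ∀ n, ‖β n • p n‖ ^ 2 ≤ (2 / m) * (Jn n - Jm n) := by
        intro n
        rw [div_mul_eq_mul_div, le_div_iff₀ hm, hJnv, hJmv]
        nlinarith [hsq n]
      have h' : Filter.Tendsto (fun n => (2 / m) * (Jn n - Jm n)) Filter.atTop (nhds 0) := by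
        simpa using hΔq0.const_mul (2 / m)
      exact squeeze_zero (fun n => sq_nonneg _) key h'
    have := (Real.continuous_sqrt.tendsto 0).comp hsq0
    simpa [Function.comp_def, Real.sqrt_sq_eq_abs, abs_norm] using this
  -- gradient bound
  have hgsq : ∀ n, ‖g n‖ ^ 2 ≤ 4 * M * (J (q n, L n) - B) := by
    intro n
    by_cases hg0 : g n = 0
    · rw [hg0]
      simp only [norm_zero]
      nlinarith [hM, sub_nonneg.2 (hBle (q n, L n)), sq_nonneg (0:ℝ)]
    · have hMt : (0:ℝ) < 1 / (2 * M) := by positivity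
      have h := hdesc (q n) (L n) (-(g n)) (1 / (2 * M)) hMt
      rw [← hg n, inner_neg_right, real_inner_self_eq_norm_sq, norm_neg] at h
      have hb := hBle (q n + (1 / (2 * M)) • -g n, L n)
      have e1 : (1 / (2 * M)) * ‖g n‖ ^ 2 ≤ 2 * (J (q n, L n) - B) := by
        have e : M * (1 / (2 * M)) ^ 2 * ‖g n‖ ^ 2
            = (1 / 2) * ((1 / (2 * M)) * ‖g n‖ ^ 2) := by
          field_simp
        nlinarith [h, hb, e]
      have e2 : ‖g n‖ ^ 2 = 2 * M * ((1 / (2 * M)) * ‖g n‖ ^ 2) := by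
        field_simp
      rw [e2]
      nlinarith [mul_le_mul_of_nonneg_left e1 (by linarith : (0:ℝ) ≤ 2 * M)]
  set G : ℝ := Real.sqrt (4 * M * (Jn 0 - B)) with hG
  have hGb : ∀ n, ‖g n‖ ≤ G := by
    intro n
    have hJle : J (q n, L n) ≤ Jn 0 := by
      rw [← hJnv n]; exact hanti (Nat.zero_le n)
    have key2 : ‖g n‖ ^ 2 ≤ 4 * M * (Jn 0 - B) := by nlinarith [hgsq n]
    calc ‖g n‖ = Real.sqrt (‖g n‖ ^ 2) := by rw [Real.sqrt_sq (norm_nonneg _)]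
      _ ≤ G := Real.sqrt_le_sqrt key2
  have hG0 : 0 ≤ G := Real.sqrt_nonneg _
  -- Lipschitz consequences
  have hgdiff : ∀ n, ‖g (n + 1) - g n‖ ≤ M * (‖β n • p n‖ + lam n * |d n|) := by
    intro n
    have h := hLip (q (n + 1), L (n + 1)) (q n, L n)
    simp only at h
    have e1 : q (n + 1) - q n = β n • p n := by rw [hq n]; abel
    have e2 : L (n + 1) - L n = lam n * d n := by rw [hL n]; ring
    rw [e1, e2, ← hg n, ← hg (n + 1)] at h
    apply sqrt_trick
      (mul_nonneg hM.le (add_nonneg (norm_nonneg _) (mul_nonneg (hlam n).le (abs_nonneg _)))) _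
      (norm_nonneg _)
    have hcross : 0 ≤ ‖β n • p n‖ * (lam n * |d n|) :=
      mul_nonneg (norm_nonneg _) (mul_nonneg (hlam n).le (abs_nonneg _))
    have hdd : (lam n * d n) ^ 2 = (lam n * |d n|) ^ 2 := by rw [mul_pow, mul_pow, sq_abs]
    nlinarith [h, sq_nonneg (gradL (q (n + 1)) (L (n + 1)) - gradL (q n) (L n)), hdd, hcross,
      sq_nonneg M, hM.le]
  have hghat : ∀ n, ‖g (n + 1) - gradq (q (n + 1)) (L n)‖ ≤ M * (lam n * |d n|) := by
    intro n
    have h := hLip (q (n + 1), L (n + 1)) (q (n + 1), L n)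
    simp only [sub_self, norm_zero] at h
    have e2 : L (n + 1) - L n = lam n * d n := by rw [hL n]; ring
    rw [e2, ← hg (n + 1)] at h
    apply sqrt_trick (mul_nonneg hM.le (mul_nonneg (hlam n).le (abs_nonneg _))) _
      (norm_nonneg _)
    have hdd : (lam n * d n) ^ 2 = (lam n * |d n|) ^ 2 := by rw [mul_pow, mul_pow, sq_abs]
    nlinarith [h, sq_nonneg (gradL (q (n + 1)) (L (n + 1)) - gradL (q (n + 1)) (L n)), hdd]
  -- the key frequency claim
  have key : ∀ ε : ℝ, 0 < ε → ∃ᶠ n in Filter.atTop, ‖g n‖ < ε := by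
    intro ε hε
    by_contra hcon
    rw [Filter.not_frequently] at hcon
    have hcon' : ∀ᶠ n in Filter.atTop, ε ≤ ‖g n‖ := hcon.mono (fun n hn => not_lt.1 hn)
    obtain ⟨N0, hN0⟩ := Filter.eventually_atTop.1 hcon'
    have hεG : ε ≤ G := le_trans (hN0 N0 le_rfl) (hGb N0)
    have hGpos : 0 < G := lt_of_lt_of_le hε hεG
    -- δ smallness
    have hδ0 : Filter.Tendsto (fun n => M * (‖β n • p n‖ + lam n * |d n|))
        Filter.atTop (nhds 0) := by
      have := (hs0.add hld1).const_mul M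
      simpa using this
    have hev1 : ∀ᶠ n in Filter.atTop, M * (‖β n • p n‖ + lam n * |d n|) < ε ^ 2 / (2 * G) :=
      hδ0.eventually_lt_const (div_pos (pow_pos hε 2) (by linarith))
    obtain ⟨N1, hN1⟩ := Filter.eventually_atTop.1 hev1
    set N := max N0 N1 with hNdef
    -- α bound
    have hαb : ∀ n, N ≤ n → |α (n + 1)| ≤ 1 / 2 := by
      intro n hn
      have hgn : ε ≤ ‖g n‖ := hN0 n (le_trans (le_max_left _ _) hn)
      have hδn : M * (‖β n • p n‖ + lam n * |d n|) < ε ^ 2 / (2 * G) :=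
        hN1 n (le_trans (le_max_right _ _) hn)
      have hδnn : 0 ≤ M * (‖β n • p n‖ + lam n * |d n|) :=
        mul_nonneg hM.le (add_nonneg (norm_nonneg _) (mul_nonneg (hlam n).le (abs_nonneg _)))
      rw [hα n, abs_div]
      have hnum : |⟪g (n + 1), g (n + 1) - g n⟫|
          ≤ G * (M * (‖β n • p n‖ + lam n * |d n|)) := by
        calc |⟪g (n + 1), g (n + 1) - g n⟫| ≤ ‖g (n + 1)‖ * ‖g (n + 1) - g n‖ :=
              abs_real_inner_le_norm _ _
          _ ≤ G * (M * (‖β n • p n‖ + lam n * |d n|)) :=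
              mul_le_mul (hGb _) (hgdiff n) (norm_nonneg _) hG0
      have hd2 : (0:ℝ) < ε ^ 2 := pow_pos hε 2
      have hden : ε ^ 2 ≤ |‖g n‖ ^ 2| := by
        rw [abs_of_nonneg (sq_nonneg _)]
        nlinarith [hgn, hε]
      have step1 : |⟪g (n + 1), g (n + 1) - g n⟫| / |‖g n‖ ^ 2|
          ≤ (G * (M * (‖β n • p n‖ + lam n * |d n|))) / ε ^ 2 :=
        div_le_div₀ (mul_nonneg hG0 hδnn) hnum hd2 hden
      have step2 : (G * (M * (‖β n • p n‖ + lam n * |d n|))) / ε ^ 2 ≤ 1 / 2 := by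
        rw [div_le_div_iff₀ hd2 (by norm_num : (0:ℝ) < 2)]
        have h' := (lt_div_iff₀ (by linarith : (0:ℝ) < 2 * G)).1 hδn
        nlinarith [h', hG0, hδnn]
      linarith
    -- bound on ‖p n‖
    set P := max ‖p N‖ (2 * G) with hPdef
    have hP0 : 0 < P := lt_of_lt_of_le (by linarith) (le_max_right _ _)
    have hPb : ∀ n, N ≤ n → ‖p n‖ ≤ P := by
      intro n hn
      induction n, hn using Nat.le_induction with
      | base => exact le_max_left _ _
      | succ n hn ih =>
        rw [hp n]
        have hstep : ‖-g (n + 1) + α (n + 1) • p n‖ ≤ ‖g (n + 1)‖ + |α (n + 1)| * ‖p n‖ := by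
          refine le_trans (norm_add_le _ _) ?_
          rw [norm_neg, norm_smul, Real.norm_eq_abs]
        have h2' : |α (n + 1)| * ‖p n‖ ≤ (1 / 2) * P :=
          mul_le_mul (hαb n hn) ih (norm_nonneg _) (by norm_num)
        have h3' : 2 * G ≤ P := le_max_right _ _
        have h4' : ‖g (n + 1)‖ ≤ G := hGb _
        linarith
    -- second smallness
    have hε'0 : Filter.Tendsto (fun n => M * (lam n * |d n|)) Filter.atTop (nhds 0) := by
      simpa using hld1.const_mul M
    have hev2 : ∀ᶠ n in Filter.atTop, M * (lam n * |d n|) < ε ^ 2 / P :=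
      hε'0.eventually_lt_const (div_pos (pow_pos hε 2) hP0)
    obtain ⟨N2', hN2'⟩ := Filter.eventually_atTop.1 hev2
    set N2 := max N N2' with hN2def
    -- descent direction property
    have hinnerneg : ∀ n, N2 ≤ n → ⟪g (n + 1), p (n + 1)⟫ ≤ -(ε ^ 2 / 2) := by
      intro n hn
      have hnN : N ≤ n := le_trans (le_max_left _ _) hn
      have hgn1 : ε ≤ ‖g (n + 1)‖ :=
        hN0 (n + 1) (le_trans (le_trans (le_max_left N0 N1) hnN) (Nat.le_succ n))
      have hprev : |⟪g (n + 1), p n⟫| ≤ M * (lam n * |d n|) * P := by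
        have h0 : ⟪g (n + 1), p n⟫ = ⟪g (n + 1) - gradq (q (n + 1)) (L n), p n⟫ := by
          rw [inner_sub_left, horth n, sub_zero]
        rw [h0]
        calc |⟪g (n + 1) - gradq (q (n + 1)) (L n), p n⟫|
            ≤ ‖g (n + 1) - gradq (q (n + 1)) (L n)‖ * ‖p n‖ := abs_real_inner_le_norm _ _
          _ ≤ M * (lam n * |d n|) * P :=
              mul_le_mul (hghat n) (hPb n hnN) (norm_nonneg _)
                (mul_nonneg hM.le (mul_nonneg (hlam n).le (abs_nonneg _)))
      have hexp : ⟪g (n + 1), p (n + 1)⟫ = -‖g (n + 1)‖ ^ 2 + α (n + 1) * ⟪g (n + 1), p n⟫ := by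
        rw [hp n, inner_add_right, inner_neg_right, real_inner_self_eq_norm_sq,
          real_inner_smul_right]
      have hh1 : α (n + 1) * ⟪g (n + 1), p n⟫ ≤ (1 / 2) * (M * (lam n * |d n|) * P) := by
        calc α (n + 1) * ⟪g (n + 1), p n⟫ ≤ |α (n + 1) * ⟪g (n + 1), p n⟫| := le_abs_self _
          _ = |α (n + 1)| * |⟪g (n + 1), p n⟫| := abs_mul _ _
          _ ≤ (1 / 2) * (M * (lam n * |d n|) * P) :=
              mul_le_mul (hαb n hnN) hprev (abs_nonneg _) (by norm_num)
      have hh2 : M * (lam n * |d n|) < ε ^ 2 / P := hN2' n (le_trans (le_max_right _ _) hn)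
      have hh3 : M * (lam n * |d n|) * P < ε ^ 2 := (lt_div_iff₀ hP0).1 hh2
      rw [hexp]
      nlinarith [sq_nonneg (‖g (n + 1)‖ - ε), hgn1, hε, hh1, hh3]
    -- a uniform positive decrease, contradiction
    have hdec2 : ∀ n, N2 ≤ n → ε ^ 4 / (16 * M * P ^ 2) ≤ Jn (n + 1) - Jm (n + 1) := by
      intro n hn
      have hnN : N ≤ n := le_trans (le_max_left _ _) hn
      set u := ⟪g (n + 1), p (n + 1)⟫ with hu
      have hu2 : u ≤ -(ε ^ 2 / 2) := hinnerneg n hn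
      have hppne : p (n + 1) ≠ 0 := by
        intro h0
        have : u = 0 := by rw [hu, h0, inner_zero_right]
        nlinarith [pow_pos hε 2]
      have hppos : 0 < ‖p (n + 1)‖ := norm_pos_iff.2 hppne
      have hppP : ‖p (n + 1)‖ ≤ P := hPb (n + 1) (le_trans hnN (Nat.le_succ n))
      set t := -u / (2 * M * ‖p (n + 1)‖ ^ 2) with htdef
      have ht : 0 < t := by
        apply div_pos
        · nlinarith [pow_pos hε 2]
        · positivity
      have h := hdesc (q (n + 1)) (L (n + 1)) (p (n + 1)) t ht
      rw [← hg (n + 1), ← hu] at h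
      have hmt : M * t ^ 2 * ‖p (n + 1)‖ ^ 2 = -u * t / 2 := by
        rw [htdef]
        field_simp
      rw [hmt] at h
      have hls' : Jm (n + 1) ≤ J (q (n + 1) + t • p (n + 1), L (n + 1)) := by
        have h2 := hls (n + 1) t
        rw [hJmv, hq (n + 1)]
        exact h2
      -- compare the decrease with the constant
      have e : t * u = -(u ^ 2 / (2 * M * ‖p (n + 1)‖ ^ 2)) := by
        rw [htdef]
        field_simp
      have husq : ε ^ 4 / 4 ≤ u ^ 2 := by nlinarith [hu2, pow_pos hε 2]
      have hdd : (ε ^ 4 / 4) / (4 * M * P ^ 2) ≤ u ^ 2 / (4 * M * ‖p (n + 1)‖ ^ 2) := by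
        apply div_le_div₀ (sq_nonneg u) husq (by positivity)
        have : ‖p (n + 1)‖ ^ 2 ≤ P ^ 2 := pow_le_pow_left₀ (norm_nonneg _) hppP 2
        nlinarith [hM.le]
      have hde : (ε ^ 4 / 4) / (4 * M * P ^ 2) = ε ^ 4 / (16 * M * P ^ 2) := by
        rw [div_div]
        congr 1
        ring
      have he2 : u ^ 2 / (2 * M * ‖p (n + 1)‖ ^ 2) / 2 = u ^ 2 / (4 * M * ‖p (n + 1)‖ ^ 2) := by
        rw [div_div]
        congr 1
        ring
      have hfinal : t * u / 2 ≤ -(ε ^ 4 / (16 * M * P ^ 2)) := by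
        rw [e, ← hde]
        linarith [hdd, he2.symm.le, he2.le]
      rw [hJnv, hJmv] at *
      have := le_trans hls' h
      nlinarith [this, hfinal]
    have hpos : 0 < ε ^ 4 / (16 * M * P ^ 2) :=
      div_pos (pow_pos hε 4) (mul_pos (by linarith : (0:ℝ) < 16 * M) (pow_pos hP0 2))
    have hev3 := hΔq0.eventually_lt_const hpos
    obtain ⟨N3, hN3⟩ := Filter.eventually_atTop.1 hev3
    have ha := hdec2 (max N2 N3) (le_max_left _ _)
    have hb := hN3 (max N2 N3 + 1) (le_trans (le_max_right _ _) (Nat.le_succ _))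
    linarith
  -- conclusion
  have hnn : ∀ n, (0:ℝ) ≤ ‖g n‖ + |d n| :=
    fun n => add_nonneg (norm_nonneg _) (abs_nonneg _)
  have hbdd_ge : Filter.IsBoundedUnder (· ≥ ·) Filter.atTop (fun n => ‖g n‖ + |d n|) :=
    Filter.isBoundedUnder_of ⟨0, fun n => hnn n⟩
  have hle : ∀ ε : ℝ, 0 < ε →
      Filter.liminf (fun n => ‖g n‖ + |d n|) Filter.atTop ≤ ε := by
    intro ε hε
    apply Filter.liminf_le_of_frequently_le _ hbdd_ge
    have hd_ev : ∀ᶠ n in Filter.atTop, |d n| < ε / 2 :=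
      hd0.eventually_lt_const (by linarith)
    have := (key (ε / 2) (by linarith)).and_eventually hd_ev
    exact this.mono (fun n hn => by linarith [hn.1, hn.2])
  have hge : (0:ℝ) ≤ Filter.liminf (fun n => ‖g n‖ + |d n|) Filter.atTop := by
    apply Filter.le_liminf_of_le
    · have hd_ev : ∀ᶠ n in Filter.atTop, |d n| < 1 :=
        hd0.eventually_lt_const (by norm_num)
      exact Filter.isCoboundedUnder_ge_of_eventually_le Filter.atTop
        (x := G + 1) (hd_ev.mono fun n hn => by linarith [hGb n])
    · exact Filter.Eventually.of_forall hnn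
  by_contra hne
  have hlt : 0 < Filter.liminf (fun n => ‖g n‖ + |d n|) Filter.atTop :=
    lt_of_le_of_ne hge (Ne.symm hne)
  have := hle _ (half_pos hlt)
  linarith
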